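/- For n > 0, j > 0, and i + j < n, the numbers K(n,i,j) satisfy j·K(n,i,j) = (n−i−j)·K(n,i,j−1) + (i+1)·K(n,i+1,j−1). -/

import Mathlib

open Finset

/-- A segmented permutation of size `n`: a permutation of `Fin n` together with a
set of barred gaps among the `n-1` gaps between consecutive positions. -/
abbrev SegPerm (n : ℕ) := Equiv.Perm (Fin n) × Finset (Fin (n - 1))

/-- The left endpoint of gap `i`, as an element of `Fin n`. -/
def gapL {n : ℕ} (i : Fin (n - 1)) : Fin n := ⟨i.1, by have := i.2; omega⟩

/-- The right endpoint of gap `i`, as an element of `Fin n`. -/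
def gapR {n : ℕ} (i : Fin (n - 1)) : Fin n := ⟨i.1 + 1, by have := i.2; omega⟩

/-- Number of descents of a segmented permutation: gaps that are not barred and
where the value decreases. -/
def desNum {n : ℕ} (π : SegPerm n) : ℕ :=
  (univ.filter (fun i : Fin (n - 1) => i ∉ π.2 ∧ π.1 (gapR i) < π.1 (gapL i))).card

/-- Number of bars of a segmented permutation. -/
def segNum {n : ℕ} (π : SegPerm n) : ℕ := π.2.card

/-- Number of descents of an ordinary permutation. -/
def permDes {n : ℕ} (σ : Equiv.Perm (Fin n)) : ℕ :=
  (univ.filter (fun i : Fin (n - 1) => σ (gapR i) < σ (gapL i))).card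

/-- The Eulerian number `A(n,k)`. -/
def eulerian (n k : ℕ) : ℕ :=
  ((univ : Finset (Equiv.Perm (Fin n))).filter (fun σ => permDes σ = k)).card

/-- `K(n,i,j)`: number of segmented permutations of size `n` with `i` descents
and `j` bars. -/
def Knum (n i j : ℕ) : ℕ :=
  ((univ : Finset (SegPerm n)).filter (fun π => desNum π = i ∧ segNum π = j)).card

/-- `K(n,i,j)` with integer indices; it vanishes for negative indices. -/
def Kint (n : ℕ) (i j : ℤ) : ℤ :=
  (((univ : Finset (SegPerm n)).filter
      (fun π => (desNum π : ℤ) = i ∧ (segNum π : ℤ) = j)).card : ℤ)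

/-- `T(n,k)`: number of segmented permutations of size `n` with `k` descents. -/
def Tnum (n k : ℕ) : ℕ :=
  ((univ : Finset (SegPerm n)).filter (fun π => desNum π = k)).card

/-- `T(n,k)` with an integer index; it vanishes for negative indices. -/
def Tint (n : ℕ) (k : ℤ) : ℤ :=
  (((univ : Finset (SegPerm n)).filter (fun π => (desNum π : ℤ) = k)).card : ℤ)

/-- Stirling numbers of the second kind. -/
def stirling : ℕ → ℕ → ℕ
  | 0, 0 => 1
  | 0, _ + 1 => 0
  | _ + 1, 0 => 0
  | n + 1, k + 1 => (k + 1) * stirling n (k + 1) + stirling n k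

/-- The generalized Eulerian polynomial `α_n(t,q)`, as a function of real arguments. -/
noncomputable def alphaF (n : ℕ) (t q : ℝ) : ℝ :=
  ∑ π : SegPerm n, t ^ desNum π * q ^ segNum π

lemma card_pairs {α β : Type*} [Fintype α] [Fintype β] [DecidableEq β]
    (p : α → Prop) [DecidablePred p] (f : α → Finset β) :
    (univ.filter (fun x : α × β => p x.1 ∧ x.2 ∈ f x.1)).card
      = ∑ a ∈ univ.filter p, (f a).card := by
  classical
  rw [Finset.card_filter, Fintype.sum_prod_type, Finset.sum_filter]
  refine Finset.sum_congr rfl fun a _ => ?_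
  by_cases hp : p a
  · simp only [hp, true_and, if_true, ← Finset.card_filter, Finset.filter_univ_mem]
  · simp [hp]

lemma des_insert {n : ℕ} (σ : Equiv.Perm (Fin n)) (T : Finset (Fin (n-1))) (g : Fin (n-1))
    (hg : g ∉ T) :
    desNum (σ, T) = desNum (σ, insert g T) + (if σ (gapR g) < σ (gapL g) then 1 else 0) := by
  unfold desNum
  dsimp only
  have h : (univ.filter (fun i : Fin (n-1) => i ∉ insert g T ∧ σ (gapR i) < σ (gapL i)))
      = (univ.filter (fun i : Fin (n-1) => i ∉ T ∧ σ (gapR i) < σ (gapL i))).erase g := by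
    ext i
    simp only [Finset.mem_erase, Finset.mem_filter, Finset.mem_insert, Finset.mem_univ,
      true_and, not_or]
    tauto
  rw [h]
  by_cases hd : σ (gapR g) < σ (gapL g)
  · have hm : g ∈ (univ.filter (fun i : Fin (n-1) => i ∉ T ∧ σ (gapR i) < σ (gapL i))) := by
      simp [hg, hd]
    rw [if_pos hd, Finset.card_erase_of_mem hm]
    have := Finset.card_pos.2 ⟨g, hm⟩
    omega
  · rw [if_neg hd, Finset.erase_eq_of_notMem (by simp [hd]), add_zero]

lemma asc_count {n : ℕ} (σ : Equiv.Perm (Fin n)) (T : Finset (Fin (n-1))) :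
    (univ.filter (fun g : Fin (n-1) => g ∉ T ∧ ¬ σ (gapR g) < σ (gapL g))).card
      = (n - 1) - T.card - desNum (σ, T) := by
  have h1 : (univ.filter (fun g : Fin (n-1) => g ∉ T)).card = (n-1) - T.card := by
    rw [Finset.filter_not, Finset.card_sdiff_of_subset (Finset.filter_subset _ _)]
    simp [Finset.filter_univ_mem]
  have h2 := Finset.card_filter_add_card_filter_not
    (s := univ.filter (fun g : Fin (n-1) => g ∉ T))
    (p := fun g => σ (gapR g) < σ (gapL g))
  rw [Finset.filter_filter, Finset.filter_filter] at h2
  have h3 : desNum (σ, T)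
      = ((univ.filter (fun g : Fin (n-1) => g ∉ T)).filter
          (fun g => σ (gapR g) < σ (gapL g))).card := by
    rw [Finset.filter_filter]; rfl
  rw [Finset.filter_filter] at h3
  omega

lemma Knum_rec (n a b : ℕ) (hb : 0 < b) (hab : a + b < n) :
    b * Knum n a b = (n - a - b) * Knum n a (b-1) + (a+1) * Knum n (a+1) (b-1) := by
  classical
  set P : Finset (SegPerm n × Fin (n-1)) :=
    univ.filter (fun x => (desNum x.1 = a ∧ segNum x.1 = b) ∧ x.2 ∈ x.1.2) with hPdef
  set R1 : Finset (SegPerm n × Fin (n-1)) :=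
    univ.filter (fun x => (desNum x.1 = a ∧ segNum x.1 = b-1) ∧
      x.2 ∈ univ.filter (fun g => g ∉ x.1.2 ∧ ¬ x.1.1 (gapR g) < x.1.1 (gapL g))) with hR1def
  set R2 : Finset (SegPerm n × Fin (n-1)) :=
    univ.filter (fun x => (desNum x.1 = a+1 ∧ segNum x.1 = b-1) ∧
      x.2 ∈ univ.filter (fun g => g ∉ x.1.2 ∧ x.1.1 (gapR g) < x.1.1 (gapL g))) with hR2def
  have hP : P.card = b * Knum n a b := by
    rw [hPdef, card_pairs (fun π : SegPerm n => desNum π = a ∧ segNum π = b) (fun π => π.2)]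
    have key : ∀ π ∈ univ.filter (fun π : SegPerm n => desNum π = a ∧ segNum π = b),
        π.2.card = b := fun π hπ => (Finset.mem_filter.1 hπ).2.2
    rw [Finset.sum_congr rfl key, Finset.sum_const, smul_eq_mul, mul_comm]
    rfl
  have hR1 : R1.card = (n - a - b) * Knum n a (b-1) := by
    rw [hR1def, card_pairs (fun π : SegPerm n => desNum π = a ∧ segNum π = b-1)
      (fun π => univ.filter (fun g => g ∉ π.2 ∧ ¬ π.1 (gapR g) < π.1 (gapL g)))]
    have key : ∀ π ∈ univ.filter (fun π : SegPerm n => desNum π = a ∧ segNum π = b-1),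
        (univ.filter (fun g => g ∉ π.2 ∧ ¬ π.1 (gapR g) < π.1 (gapL g))).card
          = n - a - b := by
      intro π hπ
      obtain ⟨hdes, hseg⟩ := (Finset.mem_filter.1 hπ).2
      have h := asc_count π.1 π.2
      have e1 : π.2.card = b - 1 := hseg
      have e2 : desNum (π.1, π.2) = a := hdes
      rw [e1, e2] at h
      rw [h]
      omega
    rw [Finset.sum_congr rfl key, Finset.sum_const, smul_eq_mul, mul_comm]
    rfl
  have hR2 : R2.card = (a+1) * Knum n (a+1) (b-1) := by
    rw [hR2def, card_pairs (fun π : SegPerm n => desNum π = a+1 ∧ segNum π = b-1)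
      (fun π => univ.filter (fun g => g ∉ π.2 ∧ π.1 (gapR g) < π.1 (gapL g)))]
    have key : ∀ π ∈ univ.filter (fun π : SegPerm n => desNum π = a+1 ∧ segNum π = b-1),
        (univ.filter (fun g => g ∉ π.2 ∧ π.1 (gapR g) < π.1 (gapL g))).card = a+1 := by
      intro π hπ
      exact (Finset.mem_filter.1 hπ).2.1
    rw [Finset.sum_congr rfl key, Finset.sum_const, smul_eq_mul, mul_comm]
    rfl
  have hdisj : Disjoint R1 R2 := by
    rw [Finset.disjoint_left]
    intro x hx1 hx2
    rw [hR1def, Finset.mem_filter] at hx1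
    rw [hR2def, Finset.mem_filter] at hx2
    omega
  have hbij : P.card = R1.card + R2.card := by
    rw [← Finset.card_union_of_disjoint hdisj]
    refine Finset.card_nbij' (fun x => ((x.1.1, x.1.2.erase x.2), x.2))
      (fun y => ((y.1.1, insert y.2 y.1.2), y.2)) ?_ ?_ ?_ ?_
    · intro x hx
      rw [Finset.mem_coe, hPdef, Finset.mem_filter] at hx
      obtain ⟨-, ⟨hdes, hseg⟩, hg⟩ := hx
      have hgT : x.2 ∉ x.1.2.erase x.2 := Finset.notMem_erase _ _
      have hins : insert x.2 (x.1.2.erase x.2) = x.1.2 := Finset.insert_erase hg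
      have hdi := des_insert x.1.1 (x.1.2.erase x.2) x.2 hgT
      rw [hins] at hdi
      have hx1 : (x.1.1, x.1.2) = x.1 := rfl
      rw [hx1] at hdi
      have hseg' : (x.1.2.erase x.2).card = b - 1 := by
        rw [Finset.card_erase_of_mem hg]
        exact congrArg (· - 1) hseg
      show ((x.1.1, x.1.2.erase x.2), x.2) ∈ R1 ∪ R2
      rw [Finset.mem_union]
      by_cases hd : x.1.1 (gapR x.2) < x.1.1 (gapL x.2)
      · right
        rw [hR2def, Finset.mem_filter]
        refine ⟨Finset.mem_univ _, ⟨?_, hseg'⟩, ?_⟩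
        · show desNum (x.1.1, x.1.2.erase x.2) = a + 1
          rw [if_pos hd] at hdi
          omega
        · show x.2 ∈ univ.filter (fun g => g ∉ x.1.2.erase x.2 ∧
            x.1.1 (gapR g) < x.1.1 (gapL g))
          simp only [Finset.mem_filter, Finset.mem_univ, true_and]
          exact ⟨hgT, hd⟩
      · left
        rw [hR1def, Finset.mem_filter]
        refine ⟨Finset.mem_univ _, ⟨?_, hseg'⟩, ?_⟩
        · show desNum (x.1.1, x.1.2.erase x.2) = a
          rw [if_neg hd, add_zero] at hdi
          rw [hdi, hdes]
        · show x.2 ∈ univ.filter (fun g => g ∉ x.1.2.erase x.2 ∧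
            ¬ x.1.1 (gapR g) < x.1.1 (gapL g))
          simp only [Finset.mem_filter, Finset.mem_univ, true_and]
          exact ⟨hgT, hd⟩
    · intro y hy
      rw [Finset.mem_coe, Finset.mem_union] at hy
      show ((y.1.1, insert y.2 y.1.2), y.2) ∈ P
      rw [hPdef, Finset.mem_filter]
      refine ⟨Finset.mem_univ _, ?_, Finset.mem_insert_self _ _⟩
      rcases hy with hy | hy
      · rw [hR1def, Finset.mem_filter] at hy
        obtain ⟨-, ⟨hdes, hseg⟩, hg⟩ := hy
        simp only [Finset.mem_filter, Finset.mem_univ, true_and] at hg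
        obtain ⟨hgT, hd⟩ := hg
        have hdi := des_insert y.1.1 y.1.2 y.2 hgT
        rw [if_neg hd, add_zero] at hdi
        have hy1 : (y.1.1, y.1.2) = y.1 := rfl
        rw [hy1] at hdi
        constructor
        · show desNum (y.1.1, insert y.2 y.1.2) = a
          omega
        · show (insert y.2 y.1.2).card = b
          have e : y.1.2.card = b - 1 := hseg
          rw [Finset.card_insert_of_notMem hgT, e]
          omega
      · rw [hR2def, Finset.mem_filter] at hy
        obtain ⟨-, ⟨hdes, hseg⟩, hg⟩ := hy
        simp only [Finset.mem_filter, Finset.mem_univ, true_and] at hg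
        obtain ⟨hgT, hd⟩ := hg
        have hdi := des_insert y.1.1 y.1.2 y.2 hgT
        rw [if_pos hd] at hdi
        have hy1 : (y.1.1, y.1.2) = y.1 := rfl
        rw [hy1] at hdi
        constructor
        · show desNum (y.1.1, insert y.2 y.1.2) = a
          omega
        · show (insert y.2 y.1.2).card = b
          have e : y.1.2.card = b - 1 := hseg
          rw [Finset.card_insert_of_notMem hgT, e]
          omega
    · intro x hx
      rw [Finset.mem_coe, hPdef, Finset.mem_filter] at hx
      obtain ⟨-, -, hg⟩ := hx
      show ((x.1.1, insert x.2 (x.1.2.erase x.2)), x.2) = x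
      rw [Finset.insert_erase hg]
    · intro y hy
      rw [Finset.mem_coe, Finset.mem_union] at hy
      have hgT : y.2 ∉ y.1.2 := by
        rcases hy with hy | hy
        · rw [hR1def, Finset.mem_filter] at hy
          simpa using (Finset.mem_filter.1 hy.2.2).2.1
        · rw [hR2def, Finset.mem_filter] at hy
          simpa using (Finset.mem_filter.1 hy.2.2).2.1
      show ((y.1.1, (insert y.2 y.1.2).erase y.2), y.2) = y
      rw [Finset.erase_insert hgT]
  rw [← hP, hbij, hR1, hR2]

lemma Kint_eq_Knum (n a b : ℕ) : Kint n (a:ℤ) (b:ℤ) = (Knum n a b : ℤ) := by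
  unfold Kint Knum
  congr 1
  refine congrArg Finset.card (Finset.filter_congr fun π _ => ?_)
  constructor
  · rintro ⟨h1, h2⟩; exact ⟨by exact_mod_cast h1, by exact_mod_cast h2⟩
  · rintro ⟨h1, h2⟩; exact ⟨by exact_mod_cast h1, by exact_mod_cast h2⟩

/-- the recurrence on `j` for the numbers `K(n,i,j)`. -/
theorem Kint_rec_j (n : ℕ) (i j : ℤ) (hn : 0 < n) (hi : 0 ≤ i) (hj : 0 < j)
    (hij : i + j < n) :
    j * Kint n i j
      = ((n : ℤ) - i - j) * Kint n i (j - 1) + (i + 1) * Kint n (i + 1) (j - 1) := by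
  obtain ⟨a, rfl⟩ := Int.eq_ofNat_of_zero_le hi
  obtain ⟨b, rfl⟩ := Int.eq_ofNat_of_zero_le hj.le
  have hb : 0 < b := by exact_mod_cast hj
  have hab : a + b < n := by exact_mod_cast hij
  have key := Knum_rec n a b hb hab
  have key' : (b:ℤ) * (Knum n a b : ℤ)
      = ((n - a - b : ℕ) : ℤ) * (Knum n a (b-1) : ℤ)
        + ((a:ℤ) + 1) * (Knum n (a+1) (b-1) : ℤ) := by exact_mod_cast key
  have hc : ((n - a - b : ℕ) : ℤ) = (n:ℤ) - a - b := by omega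
  rw [hc] at key'
  rw [show ((b:ℤ) - 1) = ((b-1:ℕ):ℤ) by omega,
    show ((a:ℤ) + 1) = ((a+1:ℕ):ℤ) by omega,
    Kint_eq_Knum, Kint_eq_Knum, Kint_eq_Knum]
  exact key'
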